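/- arXiv:2208.02898 — 6 statements merged into one kernel-verified Lean document; each statement's English description precedes it below -/
import Mathlib

section
/- For all integers m ≥ 0 and n ≥ 0, the unsigned Stirling number of the first kind [m choose m-n] (Stirling cycle number) equals the sum over all k of ⟨⟨n,k⟩⟩ · C(m+k, 2n), where ⟨⟨n,k⟩⟩ are the second-order Eulerian numbers. -/
/-- Second-order Eulerian numbers. -/
def eulerian2 : ℕ → ℤ → ℚ
  | 0, k => if k = 0 then 1 else 0
  | n+1, k => ((k : ℚ) + 1) * eulerian2 n k + (2 * (n : ℚ) + 1 - (k : ℚ)) * eulerian2 n (k - 1)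

/-- Stirling cycle numbers: [0,k] = δ_{k,0}, [n+1,k] = [n,k-1] + n·[n,k]. -/
def stirCycle : ℕ → ℤ → ℚ
  | 0, k => if k = 0 then 1 else 0
  | n+1, k => stirCycle n (k - 1) + (n : ℚ) * stirCycle n k

lemma eulerian2_neg : ∀ (n : ℕ) (k : ℤ), k < 0 → eulerian2 n k = 0
  | 0, k, h => by rw [eulerian2, if_neg (by omega)]
  | n+1, k, h => by
    rw [eulerian2, eulerian2_neg n k h, eulerian2_neg n (k-1) (by omega)]; ring

lemma eulerian2_gt : ∀ (n : ℕ) (k : ℤ), (n:ℤ) < k → eulerian2 n k = 0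
  | 0, k, h => by rw [eulerian2, if_neg (by omega)]
  | n+1, k, h => by
    rw [eulerian2, eulerian2_gt n k (by push_cast at h ⊢; omega),
        eulerian2_gt n (k-1) (by push_cast at h ⊢; omega)]; ring

lemma stirCycle_gt : ∀ (n : ℕ) (k : ℤ), (n:ℤ) < k → stirCycle n k = 0
  | 0, k, h => by rw [stirCycle, if_neg (by omega)]
  | n+1, k, h => by
    rw [stirCycle, stirCycle_gt n k (by push_cast at h ⊢; omega),
        stirCycle_gt n (k-1) (by push_cast at h ⊢; omega)]; ring

lemma stirCycle_diag : ∀ n : ℕ, stirCycle n (n:ℤ) = 1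
  | 0 => by simp [stirCycle]
  | n+1 => by
    have h1 : ((n+1:ℕ):ℤ) - 1 = (n:ℤ) := by push_cast; ring
    rw [stirCycle, h1, stirCycle_diag n, stirCycle_gt n _ (by push_cast; omega)]; ring

lemma key (m j s : ℕ) :
    ((j:ℚ)+1) * ((m+j).choose (s+1) : ℚ) + ((s:ℚ) - j) * ((m+j+1).choose (s+1) : ℚ)
      = (m:ℚ) * ((m+j).choose s : ℚ) := by
  set a := m + j with ha
  rcases le_or_gt s a with h | h
  · have hp : ((a+1).choose (s+1) : ℚ) = a.choose s + a.choose (s+1) := by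
      rw [Nat.choose_succ_succ]; push_cast; ring
    have hx : ((s:ℚ)+1) * a.choose (s+1) = ((a:ℚ) - s) * a.choose s := by
      have h2 := Nat.choose_succ_right_eq a s
      have h3 : ((a.choose (s+1) * (s+1) : ℕ) : ℚ) = ((a.choose s * (a - s) : ℕ) : ℚ) := by
        exact_mod_cast h2
      push_cast [Nat.cast_sub h] at h3
      linarith [h3]
    have hm : (m:ℚ) = (a:ℚ) - j := by rw [ha]; push_cast; ring
    rw [hm]
    linear_combination ((s:ℚ) - j) * hp + hx
  · rw [Nat.choose_eq_zero_of_lt (by omega : a < s+1),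
        Nat.choose_eq_zero_of_lt h,
        Nat.choose_eq_zero_of_lt (by omega : a+1 < s+1)]
    simp

theorem stmt1 (m n : ℕ) :
    stirCycle m ((m : ℤ) - n)
      = ∑ k ∈ Finset.range (n + 1), eulerian2 n k * (Nat.choose (m + k) (2 * n) : ℚ) := by
  induction m generalizing n with
  | zero =>
    cases n with
    | zero => simp [stirCycle, eulerian2]
    | succ n' =>
      have hz : ∀ k ∈ Finset.range (n'+1+1),
          eulerian2 (n'+1) k * (Nat.choose (0 + k) (2*(n'+1)) : ℚ) = 0 := by
        intro k hk
        rw [Nat.choose_eq_zero_of_lt (by simp only [Finset.mem_range] at hk; omega)]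
        simp
      rw [Finset.sum_congr rfl hz, Finset.sum_const_zero, stirCycle, if_neg (by push_cast; omega)]
  | succ m ih =>
    cases n with
    | zero =>
      have h : ((m+1:ℕ):ℤ) - ((0:ℕ):ℤ) = ((m+1:ℕ):ℤ) := by push_cast; ring
      rw [h, stirCycle_diag]
      simp [eulerian2]
    | succ n' =>
      have e1 : ((m+1:ℕ):ℤ) - ((n'+1:ℕ):ℤ) - 1 = (m:ℤ) - ((n'+1:ℕ):ℤ) := by push_cast; ring
      have e2 : ((m+1:ℕ):ℤ) - ((n'+1:ℕ):ℤ) = (m:ℤ) - ((n':ℕ):ℤ) := by push_cast; ring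
      rw [stirCycle, e1]
      rw [e2, ih (n'+1), ih n']
      -- Pascal on the RHS
      have pascal : ∀ k ∈ Finset.range (n'+1+1),
          eulerian2 (n'+1) k * (Nat.choose (m+1+k) (2*(n'+1)) : ℚ)
            = eulerian2 (n'+1) k * (Nat.choose (m+k) (2*(n'+1)) : ℚ)
              + eulerian2 (n'+1) k * (Nat.choose (m+k) (2*n'+1) : ℚ) := by
        intro k _
        rw [show m+1+k = (m+k)+1 from by ring, show 2*(n'+1) = (2*n'+1)+1 from by ring,
            Nat.choose_succ_succ]
        push_cast; ring
      rw [Finset.sum_congr rfl pascal, Finset.sum_add_distrib]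
      have main : (m:ℚ) * ∑ k ∈ Finset.range (n'+1),
            eulerian2 n' k * (Nat.choose (m+k) (2*n') : ℚ)
          = ∑ k ∈ Finset.range (n'+1+1),
              eulerian2 (n'+1) k * (Nat.choose (m+k) (2*n'+1) : ℚ) := by
        have expand : ∀ k ∈ Finset.range (n'+1+1),
            eulerian2 (n'+1) (k:ℤ) * (Nat.choose (m+k) (2*n'+1) : ℚ)
              = ((k:ℚ)+1) * eulerian2 n' (k:ℤ) * (Nat.choose (m+k) (2*n'+1) : ℚ)
                + (2*(n':ℚ)+1-(k:ℚ)) * eulerian2 n' ((k:ℤ)-1)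
                    * (Nat.choose (m+k) (2*n'+1) : ℚ) := by
          intro k _
          rw [eulerian2]
          push_cast; ring
        rw [Finset.sum_congr rfl expand, Finset.sum_add_distrib]
        have hA : ∑ k ∈ Finset.range (n'+1+1),
              ((k:ℚ)+1) * eulerian2 n' (k:ℤ) * (Nat.choose (m+k) (2*n'+1) : ℚ)
            = ∑ k ∈ Finset.range (n'+1),
                ((k:ℚ)+1) * eulerian2 n' (k:ℤ) * (Nat.choose (m+k) (2*n'+1) : ℚ) := by
          rw [Finset.sum_range_succ, eulerian2_gt n' _ (by push_cast; omega)]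
          ring
        have hB : ∑ k ∈ Finset.range (n'+1+1),
              (2*(n':ℚ)+1-(k:ℚ)) * eulerian2 n' ((k:ℤ)-1) * (Nat.choose (m+k) (2*n'+1) : ℚ)
            = ∑ j ∈ Finset.range (n'+1),
                (2*(n':ℚ)-(j:ℚ)) * eulerian2 n' (j:ℤ) * (Nat.choose (m+j+1) (2*n'+1) : ℚ) := by
          rw [Finset.sum_range_succ']
          rw [eulerian2_neg n' (((0:ℕ):ℤ)-1) (by omega)]
          rw [show (2*(n':ℚ)+1-((0:ℕ):ℚ)) * 0 * (Nat.choose (m+0) (2*n'+1) : ℚ) = 0 from by ring,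
              add_zero]
          refine Finset.sum_congr rfl fun j _ => ?_
          rw [show (((j+1:ℕ)):ℤ)-1 = (j:ℤ) from by push_cast; ring,
              show m+(j+1) = m+j+1 from by ring]
          push_cast; ring
        rw [hA, hB, ← Finset.sum_add_distrib, Finset.mul_sum]
        refine Finset.sum_congr rfl fun j _ => ?_
        have hk := key m j (2*n')
        calc (m:ℚ) * (eulerian2 n' (j:ℤ) * (Nat.choose (m+j) (2*n') : ℚ))
            = eulerian2 n' (j:ℤ) * ((m:ℚ) * (Nat.choose (m+j) (2*n') : ℚ)) := by ring
          _ = eulerian2 n' (j:ℤ) * (((j:ℚ)+1) * ((m+j).choose (2*n'+1) : ℚ)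
                + ((2*n':ℕ):ℚ) * ((m+j+1).choose (2*n'+1) : ℚ)
                  - (j:ℚ) * ((m+j+1).choose (2*n'+1) : ℚ)) := by
              rw [← hk]; ring
          _ = ((j:ℚ)+1) * eulerian2 n' (j:ℤ) * (Nat.choose (m+j) (2*n'+1) : ℚ)
              + (2*(n':ℚ)-(j:ℚ)) * eulerian2 n' (j:ℤ) * (Nat.choose (m+j+1) (2*n'+1) : ℚ) := by
              push_cast; ring
      rw [← main]
end

section
/- For all integers m ≥ 1 and n ≥ 1, the modified Stirling cycle number [m choose m-n]* equals the sum over all k of ⟨⟨n,k⟩⟩* · C(m+k, 2n), where ⟨⟨n,k⟩⟩* are the modified second-order Eulerian numbers. -/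
open Finset

noncomputable def Cq (a : ℤ) (r : ℕ) : ℚ := (Nat.choose a.toNat r : ℚ)

lemma Cq_pascal (a : ℤ) (ha : 0 ≤ a) (r : ℕ) :
    Cq (a + 1) (r + 1) = Cq a (r + 1) + Cq a r := by
  unfold Cq
  have : (a + 1).toNat = a.toNat + 1 := by omega
  rw [this, Nat.choose_succ_succ]
  push_cast; ring

lemma Cq_absorb (a : ℤ) (ha : 0 ≤ a) (r : ℕ) :
    ((r : ℚ) + 1) * Cq a (r + 1) = ((a : ℚ) - r) * Cq a r := by
  unfold Cq
  rcases le_or_gt a.toNat r with h | h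
  · rcases eq_or_lt_of_le h with h' | h'
    · have hz : a = (r : ℤ) := by omega
      rw [Nat.choose_eq_zero_of_lt (show a.toNat < r + 1 by omega), hz]
      push_cast; ring
    · rw [Nat.choose_eq_zero_of_lt (show a.toNat < r + 1 by omega),
        Nat.choose_eq_zero_of_lt h']
      ring
  · have hkey := Nat.choose_succ_right_eq a.toNat r
    have hc : (a : ℚ) = (a.toNat : ℚ) := by
      exact_mod_cast congrArg (fun x : ℤ => (x : ℚ)) (Int.toNat_of_nonneg ha).symm
    rw [hc]
    have := congrArg (fun x : ℕ => (x : ℚ)) hkey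
    push_cast [Nat.cast_sub h.le] at this
    linarith [this]

lemma key_pt (m t : ℕ) (hm : 1 ≤ m) (k : ℤ) (hk : -1 ≤ k) :
    ((k : ℚ) + 1) * Cq ((m : ℤ) + k) (2 * t + 1)
      + (2 * (t : ℚ) - k) * Cq ((m : ℤ) + 1 + k) (2 * t + 1)
      = (m : ℚ) * Cq ((m : ℤ) + k) (2 * t) := by
  have ha : 0 ≤ (m : ℤ) + k := by omega
  rw [show (m : ℤ) + 1 + k = ((m : ℤ) + k) + 1 by ring, Cq_pascal _ ha]
  have habs := Cq_absorb ((m : ℤ) + k) ha (2 * t)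
  push_cast at habs
  linear_combination habs

lemma E_out (E : ℕ → ℤ → ℚ)
    (hE1 : ∀ k : ℤ, E 1 k = if k = -1 then 1 else 0)
    (hErec : ∀ n : ℕ, 1 ≤ n → ∀ k : ℤ,
      E (n + 1) k = ((k : ℚ) + 1) * E n k + (2 * (n : ℚ) + 1 - (k : ℚ)) * E n (k - 1)) :
    ∀ n : ℕ, 1 ≤ n → ∀ k : ℤ, (k < -1 ∨ (n : ℤ) - 2 < k) → E n k = 0 := by
  intro n
  induction n with
  | zero => omega
  | succ n ih =>
    intro _ k hk
    rcases Nat.eq_zero_or_pos n with hn | hn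
    · subst hn
      rw [hE1, if_neg]
      intro h; subst h; simp at hk
    · rw [hErec n hn k]
      have h1 : E n k = 0 := by
        apply ih hn; rcases hk with h | h
        · left; omega
        · right; push_cast at h ⊢; omega
      have h2 : E n (k - 1) = 0 := by
        apply ih hn; rcases hk with h | h
        · left; omega
        · right; push_cast at h ⊢; omega
      rw [h1, h2]; ring

lemma Trec (E : ℕ → ℤ → ℚ)
    (hE1 : ∀ k : ℤ, E 1 k = if k = -1 then 1 else 0)
    (hErec : ∀ n : ℕ, 1 ≤ n → ∀ k : ℤ,
      E (n + 1) k = ((k : ℚ) + 1) * E n k + (2 * (n : ℚ) + 1 - (k : ℚ)) * E n (k - 1))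
    (t m : ℕ) (ht : 1 ≤ t) (hm : 1 ≤ m) :
    ∑ k ∈ Icc (-1 : ℤ) ((t : ℤ) - 1), E (t + 1) k * Cq ((m : ℤ) + 1 + k) (2 * t + 1 + 1)
      = ∑ k ∈ Icc (-1 : ℤ) ((t : ℤ) - 1), E (t + 1) k * Cq ((m : ℤ) + k) (2 * t + 1 + 1)
        + (m : ℚ) * ∑ k ∈ Icc (-1 : ℤ) ((t : ℤ) - 2), E t k * Cq ((m : ℤ) + k) (2 * t) := by
  have pascal : ∀ k ∈ Icc (-1 : ℤ) ((t : ℤ) - 1),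
      E (t + 1) k * Cq ((m : ℤ) + 1 + k) (2 * t + 1 + 1)
        = E (t + 1) k * Cq ((m : ℤ) + k) (2 * t + 1 + 1)
          + E (t + 1) k * Cq ((m : ℤ) + k) (2 * t + 1) := by
    intro k hk
    simp only [mem_Icc] at hk
    rw [show (m : ℤ) + 1 + k = ((m : ℤ) + k) + 1 by ring,
      Cq_pascal _ (by omega)]
    ring
  rw [Finset.sum_congr rfl pascal, Finset.sum_add_distrib]
  congr 1
  have expand : ∀ k ∈ Icc (-1 : ℤ) ((t : ℤ) - 1),
      E (t + 1) k * Cq ((m : ℤ) + k) (2 * t + 1)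
        = ((k : ℚ) + 1) * E t k * Cq ((m : ℤ) + k) (2 * t + 1)
          + (2 * (t : ℚ) + 1 - k) * E t (k - 1) * Cq ((m : ℤ) + k) (2 * t + 1) := by
    intro k hk
    rw [hErec t ht k]; ring
  rw [Finset.sum_congr rfl expand, Finset.sum_add_distrib]
  have hsplitA : Icc (-1 : ℤ) ((t : ℤ) - 1)
      = insert ((t : ℤ) - 1) (Icc (-1 : ℤ) ((t : ℤ) - 2)) := by
    ext x; simp only [mem_Icc, mem_insert]; omega
  have hA : ∑ k ∈ Icc (-1 : ℤ) ((t : ℤ) - 1),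
      ((k : ℚ) + 1) * E t k * Cq ((m : ℤ) + k) (2 * t + 1)
      = ∑ k ∈ Icc (-1 : ℤ) ((t : ℤ) - 2),
        ((k : ℚ) + 1) * E t k * Cq ((m : ℤ) + k) (2 * t + 1) := by
    rw [hsplitA, Finset.sum_insert (by simp only [mem_Icc]; omega)]
    rw [E_out E hE1 hErec t ht _ (by right; omega)]
    ring
  have hB : ∑ k ∈ Icc (-1 : ℤ) ((t : ℤ) - 1),
      (2 * (t : ℚ) + 1 - k) * E t (k - 1) * Cq ((m : ℤ) + k) (2 * t + 1)
      = ∑ k ∈ Icc (-1 : ℤ) ((t : ℤ) - 2),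
        (2 * (t : ℚ) - k) * E t k * Cq ((m : ℤ) + 1 + k) (2 * t + 1) := by
    have hmap : Icc (-1 : ℤ) ((t : ℤ) - 1)
        = Finset.map (addRightEmbedding (1 : ℤ)) (Icc (-2 : ℤ) ((t : ℤ) - 2)) := by
      rw [Finset.map_add_right_Icc]; congr 1; ring
    rw [hmap, Finset.sum_map]
    simp only [addRightEmbedding_apply]
    have hsplitB : Icc (-2 : ℤ) ((t : ℤ) - 2)
        = insert (-2 : ℤ) (Icc (-1 : ℤ) ((t : ℤ) - 2)) := by
      ext x; simp only [mem_Icc, mem_insert]; omega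
    rw [hsplitB, Finset.sum_insert (by simp only [mem_Icc]; omega)]
    rw [E_out E hE1 hErec t ht _ (by left; norm_num)]
    rw [mul_zero, zero_mul, zero_add]
    apply Finset.sum_congr rfl
    intro x hx
    rw [show x + 1 - 1 = x by ring, show (m : ℤ) + (x + 1) = (m : ℤ) + 1 + x by ring]
    push_cast; ring
  rw [hA, hB, Finset.mul_sum, ← Finset.sum_add_distrib]
  apply Finset.sum_congr rfl
  intro k hk
  simp only [mem_Icc] at hk
  have := key_pt m t hm k hk.1
  linear_combination E t k * this


theorem stmt3 (S : ℕ → ℤ → ℚ) (E : ℕ → ℤ → ℚ)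
    (hSrec : ∀ (n : ℕ) (k : ℤ), S (n + 1) k = S n (k - 1) + (n : ℚ) * S n k)
    (hS0 : ∀ k : ℤ, k ≤ 0 → S 0 k = 0)
    (hSdiag : ∀ n : ℕ, 1 ≤ n → S n (n : ℤ) = ((n : ℚ) - 1) / n)
    (hE1 : ∀ k : ℤ, E 1 k = if k = -1 then 1 else 0)
    (hErec : ∀ n : ℕ, 1 ≤ n → ∀ k : ℤ,
      E (n + 1) k = ((k : ℚ) + 1) * E n k + (2 * (n : ℚ) + 1 - (k : ℚ)) * E n (k - 1))
    (m n : ℕ) (hm : 1 ≤ m) (hn : 1 ≤ n) :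
    S m ((m : ℤ) - n)
      = ∑ k ∈ Finset.Icc (-1 : ℤ) ((n : ℤ) - 2),
          E n k * (Nat.choose ((m : ℤ) + k).toNat (2 * n) : ℚ) := by
  have claim : ∀ m : ℕ, 1 ≤ m → ∀ n : ℕ, 1 ≤ n →
      S m ((m : ℤ) - n)
        = ∑ k ∈ Icc (-1 : ℤ) ((n : ℤ) - 2), E n k * Cq ((m : ℤ) + k) (2 * n) := by
    intro m
    induction m with
    | zero => omega
    | succ m ih =>
      intro _ n hn
      rcases Nat.eq_zero_or_pos m with hm0 | hm1
      · subst hm0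
        have hL : S 1 ((1 : ℤ) - n) = 0 := by
          rw [hSrec 0 ((1 : ℤ) - n), hS0 _ (by omega), hS0 _ (by omega)]
          push_cast; ring
        have : ((0 + 1 : ℕ) : ℤ) = (1 : ℤ) := by norm_num
        rw [this, hL]
        symm
        apply Finset.sum_eq_zero
        intro k hk
        simp only [mem_Icc] at hk
        have hz : Cq ((1 : ℤ) + k) (2 * n) = 0 := by
          unfold Cq
          rw [Nat.choose_eq_zero_of_lt (by omega)]
          norm_num
        rw [hz]; ring
      · -- inductive step, m ≥ 1
        rcases Nat.lt_or_ge n 2 with hn2 | hn2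
        · -- n = 1
          have hn1 : n = 1 := by omega
          subst hn1
          have step := hSrec m ((m : ℤ))
          have hdiag := hSdiag m hm1
          have ihm := ih hm1 1 le_rfl
          -- simplify index casts
          have e1 : ((m : ℤ)) - (1 : ℕ) = (m : ℤ) - 1 := by push_cast; ring
          rw [e1] at ihm
          have e2 : ((m + 1 : ℕ) : ℤ) - ((1 : ℕ) : ℤ) = (m : ℤ) + 1 - 1 := by push_cast; ring
      
          rw [show (((m:ℕ) + 1 : ℕ) : ℤ) - ((1:ℕ) : ℤ) = (m : ℤ) by push_cast; ring]
          rw [show ((m : ℕ) + 1 : ℕ) = m + 1 from rfl, step, hdiag, ihm]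
          -- now both sides are sums over Icc (-1) (-1)
          have hIcc : ((1 : ℕ) : ℤ) - 2 = (-1 : ℤ) := by norm_num
          rw [hIcc, Finset.Icc_self, Finset.sum_singleton, Finset.sum_singleton, hE1]
          norm_num
          have hc1 : Cq ((m : ℤ) + -1) 1 = (m : ℚ) - 1 := by
            unfold Cq
            rw [Nat.choose_one_right]
            have : ((m : ℤ) + -1).toNat = m - 1 := by omega
            rw [this]
            push_cast [Nat.cast_sub hm1]; ring
          have hp2 : Cq ((m : ℤ)) 2 = Cq ((m : ℤ) + -1) 2 + ((m : ℚ) - 1) := by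
            have hp := Cq_pascal ((m : ℤ) + -1) (by omega) 1
            rw [show (m : ℤ) + -1 + 1 = (m : ℤ) by ring] at hp
            rw [show (2 : ℕ) = 1 + 1 from rfl, hp, hc1]
          have hm0 : (m : ℚ) ≠ 0 := by positivity
          have hmd : (m : ℚ) * (((m : ℚ) - 1) / m) = (m : ℚ) - 1 := by field_simp
          rw [hp2, hmd]
        · -- n ≥ 2
          obtain ⟨t, rfl⟩ : ∃ t, n = t + 1 := ⟨n - 1, by omega⟩
          have ht : 1 ≤ t := by omega
          have step := hSrec m ((m : ℤ) - t)
          have ih1 := ih hm1 (t + 1) (by omega)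
          have ih2 := ih hm1 t ht
          have trec := Trec E hE1 hErec t m ht hm1
          rw [show (m : ℤ) - (t : ℤ) - 1 = (m : ℤ) - ((t + 1 : ℕ) : ℤ) by push_cast; ring] at step
          rw [show (((m : ℕ) + 1 : ℕ) : ℤ) - (((t : ℕ) + 1 : ℕ) : ℤ) = (m : ℤ) - t by push_cast; ring]
          rw [step, ih1, ih2]
          rw [show (((t : ℕ) + 1 : ℕ) : ℤ) - 2 = (t : ℤ) - 1 by push_cast; ring] at *
          rw [show 2 * (t + 1) = 2 * t + 1 + 1 by ring] at *
          rw [show (((m : ℕ) + 1 : ℕ) : ℤ) = (m : ℤ) + 1 by push_cast; ring]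
          rw [trec]
  have := claim m hm n hn
  simpa only [Cq] using this
end

section
/- Let γ_r be the Stirling coefficients defined by γ_0 = 1 and r·γ_r = Σ_{j=0}^{r-1} (B_{j+2}/(j+2)) γ_{r-1-j}. Then for all r ≥ 0, Σ_{j=0}^{r} (-1)^j (j+1) γ_{j+1} γ_{r-j} = B_{r+2}/(r+2). -/
open Finset

lemma negpow {m n : ℕ} (h : m ≤ n) : (-1:ℚ)^(n-m) = (-1)^n * (-1)^m := by
  have h1 : (-1:ℚ)^(n-m) * (-1)^m = (-1)^n := by rw [← pow_add, Nat.sub_add_cancel h]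
  have h2 : (-1:ℚ)^m * (-1)^m = 1 := by rw [← pow_add, ← two_mul, pow_mul]; norm_num
  calc (-1:ℚ)^(n-m) = (-1:ℚ)^(n-m) * ((-1)^m * (-1)^m) := by rw [h2, mul_one]
    _ = ((-1:ℚ)^(n-m) * (-1)^m) * (-1)^m := by ring
    _ = (-1)^n * (-1)^m := by rw [h1]

lemma bodd (k : ℕ) (hk : Odd k) : bernoulli' (k+2) / (k+2) = 0 := by
  rw [bernoulli'_eq_zero_of_odd (hk.add_even even_two) (by omega)]
  simp

lemma Sodd (γ : ℕ → ℚ) {n : ℕ} (hn : Odd n) :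
    ∑ m ∈ Finset.range (n+1), (-1:ℚ)^m * γ m * γ (n-m) = 0 := by
  have hrefl := Finset.sum_range_reflect (fun m => (-1:ℚ)^m * γ m * γ (n-m)) (n+1)
  simp only [Nat.add_sub_cancel] at hrefl
  have h2 : ∑ m ∈ Finset.range (n+1), (-1:ℚ)^(n-m) * γ (n-m) * γ (n-(n-m))
      = ∑ m ∈ Finset.range (n+1), -((-1:ℚ)^m * γ m * γ (n-m)) := by
    apply Finset.sum_congr rfl
    intro m hm
    have hm' : m ≤ n := by simpa [Nat.lt_succ_iff] using Finset.mem_range.mp hm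
    rw [Nat.sub_sub_self hm', negpow hm', hn.neg_one_pow]
    ring
  rw [h2, Finset.sum_neg_distrib] at hrefl
  linarith

lemma T_eq (γ : ℕ → ℚ)
    (hrec : ∀ r : ℕ, 1 ≤ r →
      (r : ℚ) * γ r = ∑ j ∈ Finset.range r, bernoulli' (j + 2) / (j + 2) * γ (r - 1 - j))
    (r : ℕ) :
    ∑ j ∈ Finset.range (r + 1), (-1 : ℚ) ^ j * ((j : ℚ) + 1) * γ (j + 1) * γ (r - j)
      = ∑ k ∈ Finset.range (r + 1), (-1:ℚ)^k * (bernoulli' (k+2) / (k+2)) *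
          (∑ m ∈ Finset.range (r - k + 1), (-1:ℚ)^m * γ m * γ (r - k - m)) := by
  have hr1 : ∀ j : ℕ, ((j:ℚ)+1) * γ (j+1)
      = ∑ k ∈ Finset.range (j+1), bernoulli' (k+2) / (k+2) * γ (j - k) := by
    intro j
    have := hrec (j+1) (by omega)
    push_cast at this
    simpa using this
  have step1 : ∑ j ∈ Finset.range (r + 1), (-1 : ℚ) ^ j * ((j : ℚ) + 1) * γ (j + 1) * γ (r - j)
      = ∑ j ∈ Finset.range (r + 1), ∑ k ∈ Finset.range (j + 1),
          (-1:ℚ)^j * (bernoulli' (k+2) / (k+2)) * γ (j - k) * γ (r - j) := by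
    apply Finset.sum_congr rfl
    intro j _
    rw [mul_assoc ((-1:ℚ)^j), hr1 j, Finset.mul_sum, Finset.sum_mul]
    apply Finset.sum_congr rfl
    intro k _
    ring
  rw [step1]
  have swap := Finset.sum_Ico_Ico_comm 0 (r+1)
    (fun k j => (-1:ℚ)^j * (bernoulli' (k+2) / (k+2)) * γ (j - k) * γ (r - j))
  simp only [Nat.Ico_zero_eq_range] at swap
  rw [← swap]
  apply Finset.sum_congr rfl
  intro k hk
  have hk' : k ≤ r := by simpa [Nat.lt_succ_iff] using Finset.mem_range.mp hk
  rw [Finset.sum_Ico_eq_sum_range]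
  have hlen : r + 1 - k = r - k + 1 := by omega
  rw [hlen, Finset.mul_sum]
  apply Finset.sum_congr rfl
  intro m hm
  have hm' : m ≤ r - k := by simpa [Nat.lt_succ_iff] using Finset.mem_range.mp hm
  have e1 : k + m - k = m := by omega
  have e2 : r - (k + m) = r - k - m := by omega
  rw [e1, e2, pow_add]
  ring

lemma S_eq (γ : ℕ → ℚ) (h0 : γ 0 = 1)
    (hrec : ∀ r : ℕ, 1 ≤ r →
      (r : ℚ) * γ r = ∑ j ∈ Finset.range r, bernoulli' (j + 2) / (j + 2) * γ (r - 1 - j))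
    (n : ℕ) :
    (∑ m ∈ Finset.range (n+1), (-1:ℚ)^m * γ m * γ (n-m)) = if n = 0 then 1 else 0 := by
  induction n using Nat.strong_induction_on with
  | _ n ih =>
    rcases Nat.eq_zero_or_pos n with h | hpos
    · subst h; simp [h0]
    rw [if_neg (by omega)]
    rcases Nat.even_or_odd n with he | ho
    swap
    · exact Sodd γ ho
    -- even case, n ≥ 2 (n even and positive)
    have hn1 : n - 1 + 1 = n := by omega
    have hodd1 : Odd (n - 1) := Nat.Even.sub_odd (by omega) he odd_one
    have hT : ∑ j ∈ Finset.range ((n-1)+1), (-1:ℚ)^j * ((j:ℚ)+1) * γ (j+1) * γ ((n-1)-j)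
        = 0 := by
      rw [T_eq γ hrec (n-1)]
      apply Finset.sum_eq_zero
      intro k hk
      have hk' : k ≤ n - 1 := by simpa [Nat.lt_succ_iff] using Finset.mem_range.mp hk
      by_cases hkn : k = n - 1
      · subst hkn
        rw [bodd _ hodd1]
        ring
      · have hne : n - 1 - k ≠ 0 := by omega
        have hlt : n - 1 - k < n := by omega
        rw [ih (n-1-k) hlt, if_neg hne]
        ring
    -- n * S n = -2 * T (n-1)
    have hA : ∑ m ∈ Finset.range (n+1), (m:ℚ) * ((-1:ℚ)^m * γ m * γ (n-m))
        = -(∑ j ∈ Finset.range ((n-1)+1), (-1:ℚ)^j * ((j:ℚ)+1) * γ (j+1) * γ ((n-1)-j)) := by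
      rw [Finset.sum_range_succ' (fun m => (m:ℚ) * ((-1:ℚ)^m * γ m * γ (n-m))) n]
      rw [hn1, ← Finset.sum_neg_distrib]
      simp only [Nat.cast_zero, zero_mul, add_zero]
      apply Finset.sum_congr rfl
      intro i hi
      have hi' : i < n := Finset.mem_range.mp hi
      have e1 : n - (i + 1) = n - 1 - i := by omega
      rw [e1, pow_succ]
      push_cast
      ring
    have hB : ∑ m ∈ Finset.range (n+1), ((n-m : ℕ):ℚ) * ((-1:ℚ)^m * γ m * γ (n-m))
        = ∑ m ∈ Finset.range (n+1), (m:ℚ) * ((-1:ℚ)^m * γ m * γ (n-m)) := by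
      rw [← Finset.sum_range_reflect
        (fun m => ((n-m : ℕ):ℚ) * ((-1:ℚ)^m * γ m * γ (n-m))) (n+1)]
      simp only [Nat.add_sub_cancel]
      apply Finset.sum_congr rfl
      intro m hm
      have hm' : m ≤ n := by simpa [Nat.lt_succ_iff] using Finset.mem_range.mp hm
      rw [Nat.sub_sub_self hm', negpow hm', he.neg_one_pow]
      ring
    have key : (n:ℚ) * (∑ m ∈ Finset.range (n+1), (-1:ℚ)^m * γ m * γ (n-m)) = 0 := by
      rw [Finset.mul_sum]
      have split : ∑ m ∈ Finset.range (n+1), (n:ℚ) * ((-1:ℚ)^m * γ m * γ (n-m))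
          = (∑ m ∈ Finset.range (n+1), (m:ℚ) * ((-1:ℚ)^m * γ m * γ (n-m)))
            + ∑ m ∈ Finset.range (n+1), ((n-m : ℕ):ℚ) * ((-1:ℚ)^m * γ m * γ (n-m)) := by
        rw [← Finset.sum_add_distrib]
        apply Finset.sum_congr rfl
        intro m hm
        have hm' : m ≤ n := by simpa [Nat.lt_succ_iff] using Finset.mem_range.mp hm
        have : ((n-m : ℕ):ℚ) = (n:ℚ) - (m:ℚ) := by
          rw [Nat.cast_sub hm']
        rw [this]
        ring
      rw [split, hB, hA, hT]
      ring
    have hn0 : (n:ℚ) ≠ 0 := Nat.cast_ne_zero.mpr (by omega)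
    exact (mul_eq_zero.mp key).resolve_left hn0

theorem stmt5 (γ : ℕ → ℚ) (h0 : γ 0 = 1)
    (hrec : ∀ r : ℕ, 1 ≤ r →
      (r : ℚ) * γ r = ∑ j ∈ Finset.range r, bernoulli' (j + 2) / (j + 2) * γ (r - 1 - j))
    (r : ℕ) :
    ∑ j ∈ Finset.range (r + 1), (-1 : ℚ) ^ j * ((j : ℚ) + 1) * γ (j + 1) * γ (r - j)
      = bernoulli' (r + 2) / (r + 2) := by
  rw [T_eq γ hrec r]
  have collapse : ∀ k ∈ Finset.range (r+1), k ≠ r →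
      (-1:ℚ)^k * (bernoulli' (k+2) / (k+2)) *
        (∑ m ∈ Finset.range (r - k + 1), (-1:ℚ)^m * γ m * γ (r - k - m)) = 0 := by
    intro k hk hkr
    have hk' : k ≤ r := by simpa [Nat.lt_succ_iff] using Finset.mem_range.mp hk
    rw [S_eq γ h0 hrec (r - k), if_neg (by omega)]
    ring
  rw [Finset.sum_eq_single_of_mem r (Finset.self_mem_range_succ r) collapse]
  rw [Nat.sub_self, S_eq γ h0 hrec 0, if_pos rfl, mul_one]
  rcases Nat.even_or_odd r with he | ho
  · rw [he.neg_one_pow, one_mul]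
  · rw [bodd _ ho, mul_zero]
end

section
/- Let (c_j)_{j≥0} be a sequence of reals with c_0 = 1 satisfying Σ_{x+y=n} x c_x c_y = n c_n + 2 c_{n-2} for all n ≥ 1 (with c_m = 0 for m < 0), and define S_n(k) = Σ_{j_1+...+j_k = n} c_{j_1}···c_{j_k} (sum over nonnegative integers). Then for all integers n ≥ 1 and k ≥ 1: S_n(k+1)/(k+1) = S_n(k)/k + (2/n) S_{n-2}(k). -/
/-- S_n(k) = Σ_{j_1+⋯+j_k = n} c_{j_1}⋯c_{j_k}. -/
def Sfun (c : ℕ → ℝ) (n k : ℕ) : ℝ :=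
  ∑ p ∈ Finset.Nat.antidiagonalTuple k n, ∏ i, c (p i)

open PowerSeries Finset

lemma Sfun_succ (c : ℕ → ℝ) (n k : ℕ) :
    Sfun c n (k + 1) = ∑ p ∈ Finset.HasAntidiagonal.antidiagonal n, c p.1 * Sfun c p.2 k := by
  unfold Sfun
  simp_rw [Finset.mul_sum]
  rw [Finset.sum_sigma']
  refine Finset.sum_nbij' (fun t => (⟨(t 0, ∑ i, Fin.tail t i), Fin.tail t⟩ :
      (_ : ℕ × ℕ) × (Fin k → ℕ))) (fun q => Fin.cons q.1.1 q.2) ?_ ?_ ?_ ?_ ?_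
  · intro t ht
    rw [Finset.Nat.mem_antidiagonalTuple] at ht
    simp only [Finset.mem_sigma, Finset.HasAntidiagonal.mem_antidiagonal, Finset.Nat.mem_antidiagonalTuple]
    refine ⟨?_, trivial⟩
    rw [← ht, Fin.sum_univ_succ]
    rfl
  · rintro ⟨⟨a, b⟩, s⟩ hq
    simp only [Finset.mem_sigma, Finset.HasAntidiagonal.mem_antidiagonal,
      Finset.Nat.mem_antidiagonalTuple] at hq
    simp only [Finset.Nat.mem_antidiagonalTuple, Fin.sum_univ_succ, Fin.cons_zero,
      Fin.cons_succ]
    rw [hq.2, hq.1]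
  · intro t ht
    exact Fin.cons_self_tail t
  · rintro ⟨⟨a, b⟩, s⟩ hq
    simp only [Finset.mem_sigma, Finset.HasAntidiagonal.mem_antidiagonal,
      Finset.Nat.mem_antidiagonalTuple] at hq
    simp [Fin.tail_cons, hq.2]
  · intro t ht
    rw [Fin.prod_univ_succ]
    rfl

lemma Sfun_eq_coeff (c : ℕ → ℝ) (k n : ℕ) :
    Sfun c n k = PowerSeries.coeff n ((PowerSeries.mk c) ^ k) := by
  induction k generalizing n with
  | zero =>
    cases n with
    | zero => simp [Sfun]
    | succ m => simp [Sfun, Finset.Nat.antidiagonalTuple_zero_succ]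
  | succ k ih =>
    rw [Sfun_succ, pow_succ, mul_comm, PowerSeries.coeff_mul]
    refine Finset.sum_congr rfl fun p _ => ?_
    rw [PowerSeries.coeff_mk, ih]

lemma coeff_X_mul_deriv (h : ℝ⟦X⟧) (n : ℕ) :
    (PowerSeries.coeff n) (X * (d⁄dX ℝ) h) = (n : ℝ) * PowerSeries.coeff n h := by
  cases n with
  | zero => simp
  | succ m =>
    rw [PowerSeries.coeff_succ_X_mul, PowerSeries.coeff_derivative]
    push_cast
    ring

lemma coeff_two_mul (u : ℝ⟦X⟧) (m : ℕ) :
    PowerSeries.coeff m (2 * u) = 2 * PowerSeries.coeff m u := by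
  have : (2 : ℝ⟦X⟧) * u = (2 : ℝ) • u := by
    rw [PowerSeries.smul_eq_C_mul, map_ofNat]
  rw [this, map_smul, smul_eq_mul]

theorem stmt8 (c : ℕ → ℝ) (h0 : c 0 = 1)
    (hrec : ∀ n : ℕ, 1 ≤ n →
      ∑ p ∈ Finset.HasAntidiagonal.antidiagonal n, (p.1 : ℝ) * c p.1 * c p.2
        = (n : ℝ) * c n + 2 * (if 2 ≤ n then c (n - 2) else 0))
    (n k : ℕ) (hn : 1 ≤ n) (hk : 1 ≤ k) :
    Sfun c n (k + 1) / ((k : ℝ) + 1)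
      = Sfun c n k / k + (2 / (n : ℝ)) * (if 2 ≤ n then Sfun c (n - 2) k else 0) := by
  set f : ℝ⟦X⟧ := PowerSeries.mk c with hf
  set D : ℝ⟦X⟧ := X * (d⁄dX ℝ) f with hD
  have hcD : ∀ m : ℕ, PowerSeries.coeff m D = (m : ℝ) * c m := by
    intro m
    rw [hD, coeff_X_mul_deriv, PowerSeries.coeff_mk]
  -- Step 1 : D * f = D + 2 * (X^2 * f)
  have step1 : D * f = D + 2 * (X ^ 2 * f) := by
    ext m
    cases m with
    | zero =>
      rw [PowerSeries.coeff_mul, Finset.Nat.antidiagonal_zero, Finset.sum_singleton,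
        map_add, coeff_two_mul, hcD 0, PowerSeries.coeff_X_pow_mul']
      norm_num
    | succ m =>
      have h1 : 1 ≤ m + 1 := Nat.le_add_left 1 m
      have hs : ∑ p ∈ Finset.HasAntidiagonal.antidiagonal (m + 1),
          PowerSeries.coeff p.1 D * PowerSeries.coeff p.2 f
          = ∑ p ∈ Finset.HasAntidiagonal.antidiagonal (m + 1), (p.1 : ℝ) * c p.1 * c p.2 := by
        refine Finset.sum_congr rfl fun p _ => ?_
        rw [hcD, hf, PowerSeries.coeff_mk]
      rw [PowerSeries.coeff_mul, hs, hrec (m + 1) h1, map_add, coeff_two_mul, hcD,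
        PowerSeries.coeff_X_pow_mul', hf, PowerSeries.coeff_mk]
  obtain ⟨j, rfl⟩ : ∃ j, k = j + 1 := ⟨k - 1, (Nat.succ_pred_eq_of_pos hk).symm⟩
  -- Step 2 : multiply by f^j
  have step2 : D * f ^ (j + 1) = D * f ^ j + 2 * (X ^ 2 * f ^ (j + 1)) := by
    calc D * f ^ (j + 1) = (D * f) * f ^ j := by ring
    _ = (D + 2 * (X ^ 2 * f)) * f ^ j := by rw [step1]
    _ = D * f ^ j + 2 * (X ^ 2 * f ^ (j + 1)) := by ring
  -- Step 3
  have step3 : ∀ m : ℕ, ((m : ℝ) + 1) * PowerSeries.coeff n (D * f ^ m)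
      = (n : ℝ) * PowerSeries.coeff n (f ^ (m + 1)) := by
    intro m
    have hd : (d⁄dX ℝ) (f ^ (m + 1)) = (m + 1) • (f ^ m * (d⁄dX ℝ) f) := by
      rw [Derivation.leibniz_pow]
      simp [smul_smul, Nat.succ_sub_one, smul_eq_mul, mul_comm]
    have key : X * (d⁄dX ℝ) (f ^ (m + 1)) = ((m : ℝ) + 1) • (D * f ^ m) := by
      rw [hd, hD, nsmul_eq_mul, PowerSeries.smul_eq_C_mul]
      simp only [map_add, map_one, map_natCast]
      push_cast
      ring
    have h2 := coeff_X_mul_deriv (f ^ (m + 1)) n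
    rw [key, map_smul, smul_eq_mul] at h2
    linarith [h2]
  have hX2 : PowerSeries.coeff n (X ^ 2 * f ^ (j + 1))
      = if 2 ≤ n then Sfun c (n - 2) (j + 1) else 0 := by
    rw [PowerSeries.coeff_X_pow_mul' (f ^ (j + 1)) 2 n]
    split_ifs with h
    · rw [Sfun_eq_coeff]
    · rfl
  have hn0 : (n : ℝ) ≠ 0 := by
    have : (0 : ℝ) < n := by exact_mod_cast hn
    linarith
  have E1 := step3 (j + 1)
  have E2 := step3 j
  have E3 := congrArg (PowerSeries.coeff n) step2
  rw [map_add, coeff_two_mul] at E3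
  rw [Sfun_eq_coeff c (j + 1 + 1) n, Sfun_eq_coeff c (j + 1) n, ← hf, ← hX2]
  push_cast at E1 E2 E3 ⊢
  have g1 : PowerSeries.coeff n (f ^ (j + 1 + 1)) / ((j : ℝ) + 1 + 1)
      = PowerSeries.coeff n (D * f ^ (j + 1)) / n := by
    rw [div_eq_div_iff (by positivity) hn0]
    linarith [E1]
  have g2 : PowerSeries.coeff n (f ^ (j + 1)) / ((j : ℝ) + 1)
      = PowerSeries.coeff n (D * f ^ j) / n := by
    rw [div_eq_div_iff (by positivity) hn0]
    linarith [E2]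
  rw [g1, g2, E3]
  ring
end

section
/- For n ≥ 1 and 0 ≤ j ≤ n+1, the integral ∫_{-∞}^0 t(1-t)^{-1} F_j(t) F_{n+1-j}(t) dt equals (-1)^j ∫_{-∞}^0 t(1-t)^{-1} F_0(t) F_{n+1}(t) dt, where F_0(x)=1 and F_{m+1}(x) = d/dx[x/(1-x)·F_m(x)]. -/
open MeasureTheory Set Filter Polynomial Topology

lemma poly_bound13 (p : Polynomial ℝ) :
    ∃ C : ℝ, 0 ≤ C ∧ ∀ t : ℝ, t ≤ 0 → |p.eval t| ≤ C * (1 - t) ^ p.natDegree := by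
  refine ⟨∑ i ∈ Finset.range (p.natDegree + 1), |p.coeff i|,
    Finset.sum_nonneg (fun i _ => abs_nonneg _), fun t ht => ?_⟩
  have h1 : (1:ℝ) ≤ 1 - t := by linarith
  rw [Polynomial.eval_eq_sum_range, Finset.sum_mul]
  refine (Finset.abs_sum_le_sum_abs _ _).trans (Finset.sum_le_sum fun i hi => ?_)
  rw [abs_mul, abs_pow]
  have h2 : |t| ^ i ≤ (1 - t) ^ p.natDegree := by
    calc |t| ^ i ≤ (1-t)^i :=
          pow_le_pow_left₀ (abs_nonneg t) (by rw [abs_of_nonpos ht]; linarith) i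
      _ ≤ (1-t)^p.natDegree :=
          pow_le_pow_right₀ h1 (Nat.lt_succ_iff.mp (Finset.mem_range.mp hi))
  exact mul_le_mul_of_nonneg_left h2 (abs_nonneg _)

lemma integrable_inv_sq13 : IntegrableOn (fun t : ℝ => ((1 - t)^2)⁻¹) (Iic (0:ℝ)) := by
  have h0 : IntegrableOn (fun x : ℝ => x ^ (-2 : ℝ)) (Ioi (1/2 : ℝ)) :=
    integrableOn_Ioi_rpow_of_lt (by norm_num) (by norm_num)
  have h1 : IntegrableOn (fun x : ℝ => (x^2)⁻¹) (Ici (1:ℝ)) := by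
    refine ((h0.mono_set (fun x hx => ?_)).congr_fun (fun x hx => ?_) measurableSet_Ici)
    · exact lt_of_lt_of_le (by norm_num : (1/2:ℝ) < 1) hx
    · have hx0 : (0:ℝ) < x := lt_of_lt_of_le one_pos hx
      beta_reduce
      rw [Real.rpow_neg hx0.le, show ((2:ℝ)) = ((2:ℕ):ℝ) by norm_num, Real.rpow_natCast]
  have key := (Measure.measurePreserving_sub_left (volume : Measure ℝ) 1).integrableOn_comp_preimage
    (Homeomorph.subLeft (1:ℝ)).measurableEmbedding (f := fun x : ℝ => (x^2)⁻¹) (s := Ici (1:ℝ))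
  have h2 : IntegrableOn ((fun x : ℝ => (x^2)⁻¹) ∘ (fun t => 1 - t))
      ((fun t : ℝ => 1 - t) ⁻¹' Ici 1) := key.2 h1
  have hset : ((fun t : ℝ => 1 - t) ⁻¹' Ici 1) = Iic (0:ℝ) := by
    ext t; simp only [Set.mem_preimage, Set.mem_Ici, Set.mem_Iic]; constructor <;> intro h <;> linarith
  rw [hset] at h2
  exact h2
lemma integrable_ratio13 (p : Polynomial ℝ) (K : ℕ) (hK : p.natDegree + 2 ≤ K) :
    IntegrableOn (fun t : ℝ => p.eval t / (1 - t) ^ K) (Iic (0:ℝ)) := by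
  obtain ⟨C, hC0, hC⟩ := poly_bound13 p
  refine Integrable.mono' (integrable_inv_sq13.const_mul C) ?_ ?_
  · refine (ContinuousOn.aestronglyMeasurable ?_ measurableSet_Iic)
    apply ContinuousOn.div
    · exact (Polynomial.continuous p).continuousOn
    · exact (continuous_const.sub continuous_id).pow K |>.continuousOn
    · intro t ht
      have : (0:ℝ) < 1 - t := by simp only [Set.mem_Iic] at ht; linarith
      positivity
  · filter_upwards [ae_restrict_mem measurableSet_Iic] with t ht
    simp only [Set.mem_Iic] at ht
    have hb : (0:ℝ) < 1 - t := by linarith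
    have hbK : (0:ℝ) < (1 - t) ^ K := pow_pos hb K
    rw [Real.norm_eq_abs, abs_div, abs_of_pos hbK]
    rw [div_le_iff₀ hbK]
    have h1 : |p.eval t| ≤ C * (1 - t) ^ p.natDegree := hC t ht
    have h2 : (1 - t) ^ p.natDegree * (1 - t) ^ 2 ≤ (1 - t) ^ K := by
      rw [← pow_add]
      exact pow_le_pow_right₀ (by linarith) hK
    calc |p.eval t| = |p.eval t| * 1 := (mul_one _).symm
      _ ≤ (C * ((1-t)^2)⁻¹) * ((1 - t) ^ p.natDegree * (1 - t) ^ 2) := by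
          rw [mul_comm C]
          rw [show ((1-t)^2)⁻¹ * C * ((1 - t) ^ p.natDegree * (1 - t) ^ 2)
              = (C * (1-t)^p.natDegree) * (((1-t)^2)⁻¹ * (1-t)^2) by ring]
          rw [inv_mul_cancel₀ (by positivity), mul_one]
          exact h1.trans_eq (by ring_nf)
      _ ≤ (C * ((1-t)^2)⁻¹) * (1 - t) ^ K := by
          refine mul_le_mul_of_nonneg_left h2 ?_
          positivity

lemma tendsto_ratio13 (p : Polynomial ℝ) (K : ℕ) (hK : p.natDegree + 1 ≤ K) :
    Tendsto (fun t : ℝ => p.eval t / (1 - t) ^ K) atBot (nhds 0) := by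
  obtain ⟨C, hC0, hC⟩ := poly_bound13 p
  have htop : Tendsto (fun t : ℝ => 1 - t) atBot atTop := by
    have : Tendsto (fun t : ℝ => -t) atBot atTop := tendsto_neg_atBot_atTop
    have h := tendsto_atTop_add_const_left atBot (1:ℝ) this
    simpa [sub_eq_add_neg] using h
  have hg : Tendsto (fun t : ℝ => C * (1 - t)⁻¹) atBot (nhds (C * 0)) :=
    (tendsto_inv_atTop_zero.comp htop).const_mul C
  rw [mul_zero] at hg
  refine squeeze_zero_norm' ?_ hg
  filter_upwards [Iic_mem_atBot (0:ℝ)] with t ht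
  simp only [Set.mem_Iic] at ht
  have hb : (0:ℝ) < 1 - t := by linarith
  have hbK : (0:ℝ) < (1 - t) ^ K := pow_pos hb K
  rw [Real.norm_eq_abs, abs_div, abs_of_pos hbK, div_le_iff₀ hbK]
  have h2 : (1 - t) ^ p.natDegree * (1 - t) ≤ (1 - t) ^ K := by
    rw [← pow_succ]
    exact pow_le_pow_right₀ (by linarith) hK
  calc |p.eval t| ≤ C * (1 - t) ^ p.natDegree := hC t ht
    _ = (C * (1-t)⁻¹) * ((1-t)^p.natDegree * (1-t)) := by
        field_simp
    _ ≤ (C * (1-t)⁻¹) * (1 - t) ^ K := by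
        refine mul_le_mul_of_nonneg_left h2 ?_
        positivity

lemma hasDerivAt_ratio13 (p : Polynomial ℝ) (K : ℕ) (x : ℝ) (hx : x < 1) :
    HasDerivAt (fun y : ℝ => p.eval y / (1 - y) ^ (K+1))
      ((p.derivative * (1 - Polynomial.X) + Polynomial.C ((K:ℝ)+1) * p).eval x
        / (1 - x) ^ (K + 2)) x := by
  have hne : (1 - x) ≠ 0 := by intro h; nlinarith [h]
  have h1 : HasDerivAt (fun y : ℝ => p.eval y) (p.derivative.eval x) x := p.hasDerivAt x
  have hsub : HasDerivAt (fun y : ℝ => 1 - y) (-1 : ℝ) x := by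
    simpa using (hasDerivAt_id x).const_sub 1
  have h2 : HasDerivAt (fun y : ℝ => (1 - y) ^ (K+1))
      (((K:ℝ)+1) * (1-x)^K * (-1)) x := by
    have := hsub.fun_pow (K+1)
    simpa using this
  have h3 := h1.fun_div h2 (pow_ne_zero _ hne)
  refine h3.congr_deriv ?_
  simp only [Polynomial.eval_add, Polynomial.eval_mul, Polynomial.eval_sub,
    Polynomial.eval_one, Polynomial.eval_X, Polynomial.eval_C]
  field_simp
  ring

lemma G_eventuallyEq13 (F : ℝ → ℝ) (m : ℕ) (p : Polynomial ℝ)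
    (hp : ∀ x : ℝ, x < 1 → F x = p.eval x / (1 - x) ^ (2*m)) (x : ℝ) (hx : x < 1) :
    (fun y => y / (1 - y) * F y) =ᶠ[𝓝 x]
      (fun y => (Polynomial.X * p).eval y / (1 - y) ^ (2*m+1)) := by
  filter_upwards [Iio_mem_nhds hx] with y hy
  have hy1 : y < 1 := hy
  have hne : (1:ℝ) - y ≠ 0 := by intro h; nlinarith
  rw [hp y hy1]
  simp only [Polynomial.eval_mul, Polynomial.eval_X]
  rw [div_mul_div_comm, pow_succ, mul_comm ((1:ℝ) - y)]

lemma rep_exists13 (F : ℕ → ℝ → ℝ)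
    (h0 : ∀ x : ℝ, F 0 x = 1)
    (hrec : ∀ (m : ℕ) (x : ℝ), F (m + 1) x = deriv (fun y => y / (1 - y) * F m y) x) :
    ∀ m : ℕ, ∃ p : Polynomial ℝ, p.natDegree ≤ m ∧
      ∀ x : ℝ, x < 1 → F m x = p.eval x / (1 - x) ^ (2*m) := by
  intro m
  induction m with
  | zero =>
    refine ⟨1, by simp, fun x hx => ?_⟩
    simp [h0 x]
  | succ m ih =>
    obtain ⟨p, hdeg, hp⟩ := ih
    refine ⟨(Polynomial.X * p).derivative * (1 - Polynomial.X)
        + Polynomial.C (((2*m : ℕ) : ℝ) + 1) * (Polynomial.X * p), ?_, ?_⟩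
    · have hXp : (Polynomial.X * p).natDegree ≤ 1 + m := by
        refine (Polynomial.natDegree_mul_le).trans ?_
        simp only [Polynomial.natDegree_X]
        omega
      have hd : (Polynomial.X * p).derivative.natDegree ≤ m := by
        refine (Polynomial.natDegree_derivative_le _).trans ?_
        omega
      have h1X : (1 - Polynomial.X : Polynomial ℝ).natDegree ≤ 1 := by
        refine (Polynomial.natDegree_sub_le _ _).trans ?_
        simp
      refine (Polynomial.natDegree_add_le _ _).trans ?_
      have t1 : ((Polynomial.X * p).derivative * (1 - Polynomial.X)).natDegree ≤ m + 1 :=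
        (Polynomial.natDegree_mul_le).trans (by omega)
      have t2 : (Polynomial.C (((2*m : ℕ) : ℝ) + 1) * (Polynomial.X * p)).natDegree ≤ m + 1 := by
        refine (Polynomial.natDegree_mul_le).trans ?_
        simp only [Polynomial.natDegree_C]
        omega
      omega
    · intro x hx
      have hd := hasDerivAt_ratio13 (Polynomial.X * p) (2*m) x hx
      rw [show 2*(m+1) = 2*m + 2 from by ring, hrec m x,
        (G_eventuallyEq13 (F m) m p hp x hx).deriv_eq, hd.deriv]

lemma G_hasDerivAt13 (F : ℕ → ℝ → ℝ)
    (h0 : ∀ x : ℝ, F 0 x = 1)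
    (hrec : ∀ (m : ℕ) (x : ℝ), F (m + 1) x = deriv (fun y => y / (1 - y) * F m y) x)
    (m : ℕ) (x : ℝ) (hx : x < 1) :
    HasDerivAt (fun y => y / (1 - y) * F m y) (F (m+1) x) x := by
  obtain ⟨p, hdeg, hp⟩ := rep_exists13 F h0 hrec m
  have heq := G_eventuallyEq13 (F m) m p hp x hx
  have hd := hasDerivAt_ratio13 (Polynomial.X * p) (2*m) x hx
  have hG := hd.congr_of_eventuallyEq heq
  have hval : F (m+1) x = Polynomial.eval x ((Polynomial.X * p).derivative * (1 - Polynomial.X)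
      + Polynomial.C (((2*m : ℕ) : ℝ) + 1) * (Polynomial.X * p)) / (1 - x) ^ (2*m+2) := by
    rw [hrec m x, heq.deriv_eq, hd.deriv]
  rw [hval]
  exact hG

theorem stmt13 (F : ℕ → ℝ → ℝ)
    (h0 : ∀ x : ℝ, F 0 x = 1)
    (hrec : ∀ (m : ℕ) (x : ℝ), F (m + 1) x = deriv (fun y => y / (1 - y) * F m y) x)
    (n : ℕ) (hn : 1 ≤ n) (j : ℕ) (hj : j ≤ n + 1) :
    ∫ t in Set.Iic (0 : ℝ), (t * (1 - t)⁻¹ * F j t * F (n + 1 - j) t)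
      = (-1 : ℝ) ^ j * ∫ t in Set.Iic (0 : ℝ), (t * (1 - t)⁻¹ * F 0 t * F (n + 1) t) := by
  have hrep := rep_exists13 F h0 hrec
  have hG := G_hasDerivAt13 F h0 hrec
  have hint : ∀ a b : ℕ, a + b = n + 1 →
      IntegrableOn (fun t : ℝ => t * (1 - t)⁻¹ * F a t * F b t) (Iic 0) := by
    intro a b hab
    obtain ⟨pa, hda, hpa⟩ := hrep a
    obtain ⟨pb, hdb, hpb⟩ := hrep b
    have hdeg : (Polynomial.X * pa * pb).natDegree + 2 ≤ 2*a + 2*b + 1 := by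
      have h1 : (Polynomial.X * pa * pb).natDegree ≤ 1 + a + b := by
        refine (Polynomial.natDegree_mul_le).trans ?_
        have h2 : (Polynomial.X * pa).natDegree ≤ 1 + a := by
          refine (Polynomial.natDegree_mul_le).trans ?_
          simp only [Polynomial.natDegree_X]
          omega
        omega
      omega
    refine ((integrable_ratio13 (Polynomial.X * pa * pb) (2*a + 2*b + 1) hdeg).congr_fun
      ?_ measurableSet_Iic)
    intro t ht
    beta_reduce
    simp only [Set.mem_Iic] at ht
    have ht1 : t < 1 := lt_of_le_of_lt ht one_pos
    have hne : (1:ℝ) - t ≠ 0 := by intro h; nlinarith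
    rw [hpa t ht1, hpb t ht1]
    simp only [Polynomial.eval_mul, Polynomial.eval_X]
    have e : ((1:ℝ)-t)^(2*a + 2*b + 1) = (1-t)^(2*a) * (1-t)^(2*b) * (1-t) := by
      rw [← pow_add, ← pow_succ]
    rw [e]
    simp only [div_eq_mul_inv, mul_inv]
    ring
  have step : ∀ a : ℕ, a + 1 ≤ n + 1 →
      (∫ t in Set.Iic (0:ℝ), (t * (1 - t)⁻¹ * F (a+1) t * F (n + 1 - (a+1)) t))
        = - ∫ t in Set.Iic (0:ℝ), (t * (1 - t)⁻¹ * F a t * F (n + 1 - a) t) := by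
    intro a ha
    have hb : n + 1 - a = (n - a) + 1 := by omega
    have hb2 : n + 1 - (a + 1) = n - a := by omega
    set b := n - a with hbdef
    rw [hb, hb2]
    have hab : a + b = n := by omega
    set f' : ℝ → ℝ := fun t => t * (1 - t)⁻¹ * F (a+1) t * F b t
        + t * (1 - t)⁻¹ * F a t * F (b+1) t with hf'
    set H : ℝ → ℝ := fun y => (y / (1 - y) * F a y) * (y / (1 - y) * F b y) with hH
    have hder : ∀ x ∈ Set.Iic (0:ℝ), HasDerivAt H (f' x) x := by
      intro x hx
      simp only [Set.mem_Iic] at hx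
      have hx1 : x < 1 := lt_of_le_of_lt hx one_pos
      have h := (hG a x hx1).mul (hG b x hx1)
      have heq : F (a+1) x * (x / (1-x) * F b x) + (x / (1-x) * F a x) * F (b+1) x
          = f' x := by
        simp only [hf', div_eq_mul_inv]
        ring
      rw [heq] at h
      exact h
    have hint1 : IntegrableOn (fun t : ℝ => t * (1 - t)⁻¹ * F (a+1) t * F b t) (Iic 0) :=
      hint (a+1) b (by omega)
    have hint2 : IntegrableOn (fun t : ℝ => t * (1 - t)⁻¹ * F a t * F (b+1) t) (Iic 0) :=
      hint a (b+1) (by omega)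
    obtain ⟨pa, hda, hpa⟩ := hrep a
    obtain ⟨pb, hdb, hpb⟩ := hrep b
    have htend : Tendsto H atBot (𝓝 0) := by
      have hdeg : (Polynomial.X^2 * pa * pb).natDegree + 1 ≤ 2*a + 2*b + 2 := by
        have h1 : (Polynomial.X^2 * pa * pb).natDegree ≤ 2 + a + b := by
          refine (Polynomial.natDegree_mul_le).trans ?_
          have h2 : (Polynomial.X^2 * pa : Polynomial ℝ).natDegree ≤ 2 + a := by
            refine (Polynomial.natDegree_mul_le).trans ?_
            simp only [Polynomial.natDegree_X_pow]
            omega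
          omega
        omega
      refine Tendsto.congr' ?_ (tendsto_ratio13 (Polynomial.X^2 * pa * pb) (2*a + 2*b + 2) hdeg)
      filter_upwards [Iic_mem_atBot (0:ℝ)] with t ht
      simp only [Set.mem_Iic] at ht
      have ht1 : t < 1 := lt_of_le_of_lt ht one_pos
      have hne : (1:ℝ) - t ≠ 0 := by intro h; nlinarith
      simp only [hH]
      rw [hpa t ht1, hpb t ht1]
      simp only [Polynomial.eval_mul, Polynomial.eval_pow, Polynomial.eval_X]
      have e : ((1:ℝ)-t)^(2*a + 2*b + 2) = ((1-t) * (1-t)^(2*a)) * ((1-t) * (1-t)^(2*b)) := by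
        rw [show 2*a + 2*b + 2 = (2*a + 1) + (2*b + 1) from by ring, pow_add,
          pow_succ, pow_succ]
        ring
      rw [e]
      simp only [div_eq_mul_inv, mul_inv]
      ring
    have hH0 : H 0 = 0 := by simp [hH]
    have key := integral_Iic_of_hasDerivAt_of_tendsto' hder (hint1.add hint2) htend
    rw [hH0, sub_zero] at key
    have hsplit : ∫ t in Set.Iic (0:ℝ), f' t
        = (∫ t in Set.Iic (0:ℝ), t * (1 - t)⁻¹ * F (a+1) t * F b t)
          + ∫ t in Set.Iic (0:ℝ), t * (1 - t)⁻¹ * F a t * F (b+1) t :=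
      integral_add hint1 hint2
    rw [hsplit] at key
    linarith
  induction j with
  | zero => simp
  | succ a ih =>
    rw [step a (by omega), ih (by omega)]
    ring
end

section
/- Lagrange inversion: Let F be a formal power series over a field of characteristic zero with zero constant term and invertible linear coefficient, and let G be its compositional inverse. Then for all integers n ≥ 1 and r ≥ 1: n·[x^n] G(x)^r = r·[x^{n-r}] (x/F(x))^n. -/
open PowerSeries Polynomial Finset

namespace Lagrange19

variable {K : Type*} [CommRing K]

/-- Composition `f ∘ F`, defined coefficientwise. -/
noncomputable def pscomp (F f : PowerSeries K) : PowerSeries K :=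
  PowerSeries.mk fun m => ∑ k ∈ Finset.range (m + 1),
    PowerSeries.coeff k f * PowerSeries.coeff m (F ^ k)

lemma coeff_pscomp (F f : PowerSeries K) (m : ℕ) :
    PowerSeries.coeff m (pscomp F f) =
      ∑ k ∈ Finset.range (m + 1),
        PowerSeries.coeff k f * PowerSeries.coeff m (F ^ k) := by
  simp [pscomp]

lemma coeff_pow_eq_zero {F : PowerSeries K} (hF0 : PowerSeries.constantCoeff F = 0)
    {k m : ℕ} (h : m < k) : PowerSeries.coeff m (F ^ k) = 0 := by
  obtain ⟨g, hg⟩ := PowerSeries.X_dvd_iff.2 hF0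
  rw [hg, mul_pow, PowerSeries.coeff_X_pow_mul', if_neg (not_le.2 h)]

lemma coeff_eval₂ {F : PowerSeries K} (hF0 : PowerSeries.constantCoeff F = 0)
    (p : Polynomial K) (m : ℕ) :
    PowerSeries.coeff m (p.eval₂ (PowerSeries.C) F) =
      ∑ k ∈ Finset.range (m + 1), p.coeff k * PowerSeries.coeff m (F ^ k) := by
  rw [Polynomial.eval₂_eq_sum_range' (PowerSeries.C)
    (lt_of_lt_of_le (Nat.lt_succ_self _) (le_max_left (p.natDegree + 1) (m + 1))) F,
    map_sum]
  simp only [PowerSeries.coeff_C_mul]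
  exact (Finset.sum_subset (Finset.range_subset_range.2 (le_max_right (p.natDegree + 1) (m + 1)))
    fun k _ hk => by rw [coeff_pow_eq_zero hF0 (by simpa using hk), mul_zero]).symm

lemma coeff_pscomp_eq {F : PowerSeries K} (hF0 : PowerSeries.constantCoeff F = 0)
    (f : PowerSeries K) {m M : ℕ} (h : m < M) :
    PowerSeries.coeff m (pscomp F f) =
      PowerSeries.coeff m ((f.trunc M).eval₂ (PowerSeries.C) F) := by
  rw [coeff_eval₂ hF0, coeff_pscomp]
  refine Finset.sum_congr rfl fun k hk => ?_
  rw [PowerSeries.coeff_trunc, if_pos (lt_of_lt_of_le (Finset.mem_range.1 hk) h)]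

lemma pscomp_mul {F : PowerSeries K} (hF0 : PowerSeries.constantCoeff F = 0)
    (f g : PowerSeries K) : pscomp F (f * g) = pscomp F f * pscomp F g := by
  ext m
  have h1 : PowerSeries.coeff m (pscomp F (f * g)) =
      PowerSeries.coeff m ((f.trunc (m+1) * g.trunc (m+1)).eval₂ (PowerSeries.C) F) := by
    rw [coeff_pscomp, coeff_eval₂ hF0]
    refine Finset.sum_congr rfl fun k hk => ?_
    have hk' : k ≤ m := Nat.lt_succ_iff.1 (Finset.mem_range.1 hk)
    congr 1
    rw [Polynomial.coeff_mul, PowerSeries.coeff_mul]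
    refine Finset.sum_congr rfl fun x hx => ?_
    rw [Finset.HasAntidiagonal.mem_antidiagonal] at hx
    rw [PowerSeries.coeff_trunc, PowerSeries.coeff_trunc, if_pos (by omega), if_pos (by omega)]
  rw [h1, Polynomial.eval₂_mul, PowerSeries.coeff_mul, PowerSeries.coeff_mul]
  refine Finset.sum_congr rfl fun x hx => ?_
  rw [Finset.HasAntidiagonal.mem_antidiagonal] at hx
  rw [← coeff_pscomp_eq hF0 f (show x.1 < m + 1 by omega),
    ← coeff_pscomp_eq hF0 g (show x.2 < m + 1 by omega)]

lemma pscomp_one (F : PowerSeries K) : pscomp F (1 : PowerSeries K) = 1 := by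
  ext m
  rw [coeff_pscomp]
  rw [Finset.sum_eq_single 0]
  · simp
  · intro k hk hk0
    rw [show PowerSeries.coeff k (1 : PowerSeries K) = 0 by
      simpa [hk0] using PowerSeries.coeff_one k (R := K), zero_mul]
  · simp

lemma pscomp_pow {F : PowerSeries K} (hF0 : PowerSeries.constantCoeff F = 0)
    (f : PowerSeries K) (r : ℕ) : pscomp F (f ^ r) = (pscomp F f) ^ r := by
  induction r with
  | zero => simpa using pscomp_one F
  | succ r ih => rw [pow_succ, pow_succ, pscomp_mul hF0, ih]

lemma eval₂_derivative (F : PowerSeries K) (p : Polynomial K) :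
    d⁄dX K (p.eval₂ (PowerSeries.C) F) =
      (Polynomial.derivative p).eval₂ (PowerSeries.C) F * d⁄dX K F := by
  induction p using Polynomial.induction_on' with
  | add p q hp hq =>
    rw [Polynomial.eval₂_add, map_add, hp, hq, Polynomial.derivative_add,
      Polynomial.eval₂_add, add_mul]
  | monomial n a =>
    rw [Polynomial.eval₂_monomial, Polynomial.derivative_monomial, Polynomial.eval₂_monomial]
    cases n with
    | zero => simp
    | succ u =>
      rw [Derivation.leibniz, Derivation.leibniz_pow]
      simp only [smul_eq_mul, map_natCast, Nat.add_sub_cancel, map_mul, Nat.cast_add,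
        Nat.cast_one, map_add, map_one]
      have : d⁄dX K ((PowerSeries.C) a) = 0 := PowerSeries.derivative_C (r := a)
      rw [this]
      push_cast
      ring

lemma pscomp_derivative {F : PowerSeries K} (hF0 : PowerSeries.constantCoeff F = 0)
    (f : PowerSeries K) :
    d⁄dX K (pscomp F f) = pscomp F (d⁄dX K f) * d⁄dX K F := by
  ext m
  rw [PowerSeries.coeff_derivative, coeff_pscomp_eq hF0 f (show m + 1 < m + 2 by omega),
    ← PowerSeries.coeff_derivative, eval₂_derivative,
    ← PowerSeries.trunc_derivative f (m + 1)]
  rw [PowerSeries.coeff_mul, PowerSeries.coeff_mul]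
  refine Finset.sum_congr rfl fun x hx => ?_
  rw [Finset.HasAntidiagonal.mem_antidiagonal] at hx
  rw [← coeff_pscomp_eq hF0 _ (show x.1 < m + 1 by omega)]

section FieldPart

variable {K : Type*} [Field K] [CharZero K]

lemma residueD {F Q : PowerSeries K} (hQ : Q * F = PowerSeries.X)
    (hF0 : PowerSeries.constantCoeff F = 0) (t : ℕ) :
    PowerSeries.coeff t (d⁄dX K F * Q ^ (t + 1)) = if t = 0 then 1 else 0 := by
  have hQ0F1 : PowerSeries.constantCoeff Q * PowerSeries.coeff 1 F = 1 := by
    have h1 := congrArg (PowerSeries.coeff 1) hQ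
    rw [PowerSeries.coeff_mul, Finset.Nat.sum_antidiagonal_eq_sum_range_succ_mk] at h1
    simpa [Finset.sum_range_succ, hF0] using h1
  have hd : Q * d⁄dX K F + F * d⁄dX K Q = 1 := by
    have := congrArg (d⁄dX K) hQ
    rwa [Derivation.leibniz, smul_eq_mul, smul_eq_mul, PowerSeries.derivative_X] at this
  cases t with
  | zero =>
    rw [if_pos rfl]
    simp only [zero_add, pow_one, PowerSeries.coeff_zero_eq_constantCoeff, map_mul]
    rw [show PowerSeries.constantCoeff (d⁄dX K F) = PowerSeries.coeff 1 F by
      simpa using PowerSeries.coeff_derivative F 0]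
    rw [mul_comm]
    exact hQ0F1
  | succ u =>
    rw [if_neg (Nat.succ_ne_zero u)]
    have e : d⁄dX K F * Q ^ (u + 2) =
        Q ^ (u + 1) - PowerSeries.X * (Q ^ u * d⁄dX K Q) := by
      linear_combination Q ^ (u + 1) * hd - Q ^ u * (d⁄dX K Q) * hQ
    rw [e, map_sub, PowerSeries.coeff_succ_X_mul]
    have hpow := congrArg (PowerSeries.coeff u) (Derivation.leibniz_pow (d⁄dX K) (a := Q) (u + 1))
    rw [PowerSeries.coeff_derivative] at hpow
    simp only [Nat.add_sub_cancel, smul_eq_mul, nsmul_eq_mul, map_mul] at hpow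
    rw [← map_natCast (PowerSeries.C) (u + 1), PowerSeries.coeff_C_mul] at hpow
    push_cast at hpow
    rw [mul_comm] at hpow
    have hne : ((u : K) + 1) ≠ 0 := by
      have : ((u : K) + 1) = ((u + 1 : ℕ) : K) := by push_cast; ring
      rw [this]
      exact Nat.cast_ne_zero.mpr (Nat.succ_ne_zero u)
    exact sub_eq_zero.mpr (mul_left_cancel₀ hne hpow)

lemma residueC {F Q : PowerSeries K} (hQ : Q * F = PowerSeries.X)
    (hF0 : PowerSeries.constantCoeff F = 0) {m j : ℕ} (hj : j ≤ m) :
    PowerSeries.coeff m (F ^ j * (d⁄dX K F * Q ^ (m + 1))) = if j = m then 1 else 0 := by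
  obtain ⟨t, ht⟩ : ∃ t, m = j + t := ⟨m - j, by omega⟩
  have e1 : F ^ j * (d⁄dX K F * Q ^ (m + 1))
      = PowerSeries.X ^ j * (d⁄dX K F * Q ^ (t + 1)) := by
    rw [← hQ, show m + 1 = j + (t + 1) by omega, pow_add, mul_pow]
    ring
  rw [e1, show m = t + j by omega, PowerSeries.coeff_X_pow_mul, residueD hQ hF0 t]
  have hiff : (t = 0) ↔ (j = t + j) := by omega
  simp only [hiff]

end FieldPart

end Lagrange19




/-- Lagrange inversion: if G is the compositional inverse of F (a power series
with zero constant term and nonzero linear coefficient, composition written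
coefficient-wise) and Q = x/F(x), i.e. Q·F = x, then
n·[x^n] G^r = r·[x^{n-r}] Q^n for n, r ≥ 1 (the coefficient at a negative
index being zero). -/
theorem stmt19 {K : Type*} [Field K] [CharZero K]
    (F G Q : PowerSeries K)
    (hF0 : PowerSeries.constantCoeff F = 0)
    (hF1 : PowerSeries.coeff 1 F ≠ 0)
    (hG0 : PowerSeries.constantCoeff G = 0)
    (hFG : ∀ n : ℕ, ∑ k ∈ Finset.range (n + 1),
        PowerSeries.coeff k F * PowerSeries.coeff n (G ^ k)
        = PowerSeries.coeff n (PowerSeries.X : PowerSeries K))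
    (hGF : ∀ n : ℕ, ∑ k ∈ Finset.range (n + 1),
        PowerSeries.coeff k G * PowerSeries.coeff n (F ^ k)
        = PowerSeries.coeff n (PowerSeries.X : PowerSeries K))
    (hQ : Q * F = PowerSeries.X)
    (n r : ℕ) (hn : 1 ≤ n) (hr : 1 ≤ r) :
    (n : K) * PowerSeries.coeff n (G ^ r)
      = (r : K) * (if r ≤ n then PowerSeries.coeff (n - r) (Q ^ n) else 0) := by
  classical
  by_cases hrn : r ≤ n
  · rw [if_pos hrn]
    obtain ⟨m, rfl⟩ : ∃ m, n = m + 1 := ⟨n - 1, by omega⟩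
    have hcomp : Lagrange19.pscomp F G = PowerSeries.X :=
      PowerSeries.ext fun k => by rw [Lagrange19.coeff_pscomp]; exact hGF k
    have hHr : Lagrange19.pscomp F (G ^ r) = PowerSeries.X ^ r := by
      rw [Lagrange19.pscomp_pow hF0, hcomp]
    have key : Lagrange19.pscomp F (d⁄dX K (G ^ r)) * d⁄dX K F
        = d⁄dX K ((PowerSeries.X : PowerSeries K) ^ r) := by
      rw [← Lagrange19.pscomp_derivative hF0, hHr]
    have main : PowerSeries.coeff m
        (Lagrange19.pscomp F (d⁄dX K (G ^ r)) * (d⁄dX K F * Q ^ (m + 1)))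
        = PowerSeries.coeff m
          (d⁄dX K ((PowerSeries.X : PowerSeries K) ^ r) * Q ^ (m + 1)) := by
      rw [← mul_assoc, key]
    -- right-hand side
    have hdXr : d⁄dX K ((PowerSeries.X : PowerSeries K) ^ r)
        = PowerSeries.C (r : K) * PowerSeries.X ^ (r - 1) := by
      rw [Derivation.leibniz_pow, PowerSeries.derivative_X, smul_eq_mul, mul_one,
        nsmul_eq_mul, map_natCast]
    have hRHS : PowerSeries.coeff m
        (d⁄dX K ((PowerSeries.X : PowerSeries K) ^ r) * Q ^ (m + 1))
        = (r : K) * PowerSeries.coeff (m + 1 - r) (Q ^ (m + 1)) := by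
      rw [hdXr, mul_assoc, PowerSeries.coeff_C_mul, PowerSeries.coeff_X_pow_mul',
        if_pos (show r - 1 ≤ m by omega), show m - (r - 1) = m + 1 - r by omega]
    -- left-hand side
    set W := d⁄dX K F * Q ^ (m + 1) with hW
    set p := (d⁄dX K (G ^ r)).trunc (m + 1) with hp
    have hLHS1 : PowerSeries.coeff m
        (Lagrange19.pscomp F (d⁄dX K (G ^ r)) * W)
        = PowerSeries.coeff m (p.eval₂ (PowerSeries.C) F * W) := by
      rw [PowerSeries.coeff_mul, PowerSeries.coeff_mul]
      refine Finset.sum_congr rfl fun x hx => ?_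
      rw [Finset.HasAntidiagonal.mem_antidiagonal] at hx
      rw [Lagrange19.coeff_pscomp_eq hF0 _ (show x.1 < m + 1 by omega)]
    have hLHS2 : PowerSeries.coeff m (p.eval₂ (PowerSeries.C) F * W)
        = PowerSeries.coeff (m + 1) (G ^ r) * ((m : K) + 1) := by
      rw [Polynomial.eval₂_eq_sum_range' (PowerSeries.C)
        (PowerSeries.natDegree_trunc_lt _ m) F, Finset.sum_mul, map_sum]
      have : ∀ j ∈ Finset.range (m + 1),
          PowerSeries.coeff m (PowerSeries.C (p.coeff j) * F ^ j * W)
          = if j = m then p.coeff j else 0 := by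
        intro j hj
        rw [mul_assoc, PowerSeries.coeff_C_mul,
          Lagrange19.residueC hQ hF0 (Nat.lt_succ_iff.1 (Finset.mem_range.1 hj))]
        simp [mul_ite]
      rw [Finset.sum_congr rfl this, Finset.sum_ite_eq' (Finset.range (m + 1)) m,
        if_pos (Finset.self_mem_range_succ m)]
      rw [hp, PowerSeries.coeff_trunc, if_pos (Nat.lt_succ_self m),
        PowerSeries.coeff_derivative]
    rw [hLHS1, hLHS2, hRHS] at main
    push_cast
    linear_combination main
  · rw [if_neg hrn, mul_zero,
      Lagrange19.coeff_pow_eq_zero hG0 (show n < r by omega), mul_zero]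
end
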